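/- Let X ∈ ℝ^{M×N} with all entries nonnegative, H ∈ ℝ^{K×N} with all entries positive, and S^t ∈ ℝ^{M×K} with all entries positive. Define ξ_{ijl} = S^t_{il} H_{lj} / (S^t H)_{ij} and f₁(S, S^t) = Σ_{i,j,l} ξ_{ijl} (X_{ij} − S_{il} H_{lj} / ξ_{ijl})². Define the multiplicative update S'_{il} = S^t_{il} (X Hᵀ)_{il} / (S^t H Hᵀ)_{il}. Then S' has nonnegative entries and f₁(S', S^t) ≤ f₁(S, S^t) for every S ∈ ℝ^{M×K} with nonnegative entries, i.e., S' minimizes the auxiliary function f₁(·, S^t) over nonnegative matrices. -/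

import Mathlib

open Finset Matrix

/-- The Lee–Seung multiplicative update `S' i l = Sᵗ i l * (X * Hᵀ) i l / (Sᵗ * H * Hᵀ) i l`
produces a nonnegative matrix that minimizes the auxiliary function
`f₁(S, Sᵗ) = ∑ i j l, ξ i j l * (X i j - S i l * H l j / ξ i j l)²`,
with `ξ i j l = Sᵗ i l * H l j / (Sᵗ * H) i j`, over nonnegative matrices `S`. -/
theorem nmf_multiplicative_update_minimizes_auxiliary {M N K : ℕ}
    (X : Matrix (Fin M) (Fin N) ℝ) (hX : ∀ i j, 0 ≤ X i j)
    (H : Matrix (Fin K) (Fin N) ℝ) (hH : ∀ l j, 0 < H l j)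
    (St : Matrix (Fin M) (Fin K) ℝ) (hSt : ∀ i l, 0 < St i l)
    (S' : Matrix (Fin M) (Fin K) ℝ)
    (hS' : ∀ i l, S' i l = St i l * (X * Hᵀ) i l / (St * H * Hᵀ) i l) :
    (∀ i l, 0 ≤ S' i l) ∧
    (∀ S : Matrix (Fin M) (Fin K) ℝ, (∀ i l, 0 ≤ S i l) →
      ∑ i, ∑ j, ∑ l, (St i l * H l j / (St * H) i j) *
          (X i j - S' i l * H l j / (St i l * H l j / (St * H) i j)) ^ 2 ≤
        ∑ i, ∑ j, ∑ l, (St i l * H l j / (St * H) i j) *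
          (X i j - S i l * H l j / (St i l * H l j / (St * H) i j)) ^ 2) := by
  have hPnn : ∀ i j, 0 ≤ (St * H) i j := by
    intro i j
    rw [Matrix.mul_apply]
    exact Finset.sum_nonneg fun k _ => mul_nonneg (hSt i k).le (hH k j).le
  constructor
  · intro i l
    rw [hS' i l]
    apply div_nonneg
    · apply mul_nonneg (hSt i l).le
      rw [Matrix.mul_apply]
      exact Finset.sum_nonneg fun j _ => mul_nonneg (hX i j) (hH l j).le
    · rw [Matrix.mul_apply]
      exact Finset.sum_nonneg fun j _ => mul_nonneg (hPnn i j) (hH l j).le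
  · intro S hS
    refine Finset.sum_le_sum fun i _ => ?_
    rw [show (∑ j, ∑ l, (St i l * H l j / (St * H) i j) *
          (X i j - S' i l * H l j / (St i l * H l j / (St * H) i j)) ^ 2)
        = ∑ l, ∑ j, (St i l * H l j / (St * H) i j) *
          (X i j - S' i l * H l j / (St i l * H l j / (St * H) i j)) ^ 2 from Finset.sum_comm]
    rw [show (∑ j, ∑ l, (St i l * H l j / (St * H) i j) *
          (X i j - S i l * H l j / (St i l * H l j / (St * H) i j)) ^ 2)
        = ∑ l, ∑ j, (St i l * H l j / (St * H) i j) *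
          (X i j - S i l * H l j / (St i l * H l j / (St * H) i j)) ^ 2 from Finset.sum_comm]
    refine Finset.sum_le_sum fun l _ => ?_
    rcases isEmpty_or_nonempty (Fin N) with hN | hN
    · simp
    have hPpos : ∀ j, 0 < (St * H) i j := by
      intro j
      rw [Matrix.mul_apply]
      exact Finset.sum_pos (fun k _ => mul_pos (hSt i k) (hH k j)) ⟨l, Finset.mem_univ l⟩
    set c := St i l with hcdef
    have hcpos : 0 < c := hSt i l
    set b := ∑ j, X i j * H l j with hbdef
    set D := ∑ j, (St * H) i j * H l j with hDdef
    have hDpos : 0 < D := Finset.sum_pos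
      (fun j _ => mul_pos (hPpos j) (hH l j)) Finset.univ_nonempty
    have hb' : (X * Hᵀ) i l = b := by
      rw [Matrix.mul_apply]; simp [Matrix.transpose_apply, hbdef]
    have hD' : (St * H * Hᵀ) i l = D := by
      rw [Matrix.mul_apply]; simp [Matrix.transpose_apply, hDdef]
    have key : ∀ s : ℝ,
        (∑ j, (c * H l j / (St * H) i j) * (X i j - s * H l j / (c * H l j / (St * H) i j)) ^ 2)
        = (∑ j, (c * H l j / (St * H) i j) * (X i j) ^ 2) - 2 * s * b + s ^ 2 * D / c := by
      intro s
      have hj : ∀ j : Fin N,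
          (c * H l j / (St * H) i j) * (X i j - s * H l j / (c * H l j / (St * H) i j)) ^ 2
          = (c * H l j / (St * H) i j) * (X i j) ^ 2 - 2 * s * (X i j * H l j)
            + s ^ 2 * ((St * H) i j * H l j) / c := by
        intro j
        have h1 : ((St * H) i j) ≠ 0 := (hPpos j).ne'
        have h2 : H l j ≠ 0 := (hH l j).ne'
        have h3 : c ≠ 0 := hcpos.ne'
        field_simp
        ring
      rw [Finset.sum_congr rfl (fun j _ => hj j)]
      rw [Finset.sum_add_distrib, Finset.sum_sub_distrib, ← Finset.mul_sum,
        ← Finset.sum_div, ← Finset.mul_sum, hbdef, hDdef]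
    rw [key (S' i l), key (S i l), hS' i l, hb', hD', ← hcdef]
    set s := S i l
    have hdiff : (-(2 * s) * b + s ^ 2 * D / c)
        - (-(2 * (c * b / D)) * b + (c * b / D) ^ 2 * D / c)
        = (s * D - c * b) ^ 2 / (c * D) := by
      field_simp
      ring
    have hnn : (0:ℝ) ≤ (s * D - c * b) ^ 2 / (c * D) :=
      div_nonneg (sq_nonneg _) (mul_pos hcpos hDpos).le
    nlinarith [hdiff, hnn]
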